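/- (Cauchy-type interlacing for generalized eigenvalues under a one-dimensional reduction.) Let $\Sigma_1', \Sigma_2'$ be symmetric positive definite $N\times N$ matrices, and let $\Sigma_1, \Sigma_2$ be their principal $(N-1)\times(N-1)$ submatrices. Let $\lambda_1^{(1)} \le \cdots \le \lambda_N^{(1)}$ be the eigenvalues of $\Sigma_1'\Sigma_2'^{-1}$ and $\lambda_1^{(2)} \le \cdots \le \lambda_{N-1}^{(2)}$ the eigenvalues of $\Sigma_1\Sigma_2^{-1}$. Then $\lambda_k^{(1)} \le \lambda_k^{(2)} \le \lambda_{k+1}^{(1)}$ for all $1 \le k \le N-1$. -/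

import Mathlib

open Matrix Polynomial



-- uniqueness of monotone root tuple
lemma mono_eq_of_prod {m : ℕ} (a b : Fin m → ℝ) (ha : Monotone a) (hb : Monotone b)
    (h : ∏ i, (X - C (a i)) = ∏ i, (X - C (b i))) : a = b := by
  have key : ∀ c : Fin m → ℝ, ∏ i, (X - C (c i)) =
      ((Multiset.map c Finset.univ.val).map fun r => X - C r).prod := by
    intro c
    rw [Multiset.map_map]
    rfl
  have hr : Multiset.map a Finset.univ.val = Multiset.map b Finset.univ.val := by
    have := congrArg Polynomial.roots h
    rwa [key a, key b, roots_multiset_prod_X_sub_C, roots_multiset_prod_X_sub_C] at this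
  have huniv : (Finset.univ.val : Multiset (Fin m)) = ↑(List.finRange m) := by
    rw [Fin.univ_def]
  rw [huniv] at hr
  have hperm : (List.ofFn a).Perm (List.ofFn b) := by
    rw [List.ofFn_eq_map, List.ofFn_eq_map]
    exact Multiset.coe_eq_coe.mp (by simpa using hr)
  have := List.Perm.eq_of_sortedLE
    (List.sortedLE_ofFn_iff.mpr ha) (List.sortedLE_ofFn_iff.mpr hb) hperm
  funext i
  have := congrArg (fun l => l[(i : ℕ)]?) this
  simpa [List.getElem?_ofFn] using this


lemma charpoly_diag {m : ℕ} (d : Fin m → ℝ) :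
    (diagonal d).charpoly = ∏ i, (X - C (d i)) := by
  have : charmatrix (diagonal d) = diagonal fun i => X - C (d i) := by
    ext i j
    by_cases hij : i = j
    · subst hij; simp [charmatrix_apply_eq]
    · simp [charmatrix_apply_ne _ _ _ hij, diagonal_apply_ne _ hij, diagonal_apply_ne' _ hij]
  rw [Matrix.charpoly, this, det_diagonal]

lemma charpoly_conj {m : ℕ} (P A : Matrix (Fin m) (Fin m) ℝ) (hP : IsUnit P.det) :
    (P * A * P⁻¹).charpoly = A.charpoly := by
  have h1 : P * P⁻¹ = 1 := mul_nonsing_inv _ hP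
  have h2 : P⁻¹ * P = 1 := nonsing_inv_mul _ hP
  set f : ℝ →+* ℝ[X] := (C : ℝ →+* ℝ[X])
  have hmap : f.mapMatrix P * f.mapMatrix P⁻¹ = 1 := by
    rw [← _root_.map_mul, h1, _root_.map_one]
  have hmap2 : f.mapMatrix P⁻¹ * f.mapMatrix P = 1 := by
    rw [← _root_.map_mul, h2, _root_.map_one]
  have hcm : charmatrix (P * A * P⁻¹) =
      f.mapMatrix P * charmatrix A * f.mapMatrix P⁻¹ := by
    rw [charmatrix, charmatrix, mul_sub, sub_mul]
    congr 1
    · -- scalar X commutes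
      rw [mul_assoc]
      have : Matrix.scalar (Fin m) (X : ℝ[X]) * f.mapMatrix P⁻¹
          = f.mapMatrix P⁻¹ * Matrix.scalar (Fin m) (X : ℝ[X]) :=
        (Matrix.scalar_commute (X : ℝ[X]) (fun r => (Commute.all _ _)) (f.mapMatrix P⁻¹))
      rw [this, ← mul_assoc, hmap, one_mul]
    · rw [← _root_.map_mul, ← _root_.map_mul]
  rw [Matrix.charpoly, Matrix.charpoly, hcm, det_mul, det_mul]
  have : (f.mapMatrix P).det * (f.mapMatrix P⁻¹).det = 1 := by
    rw [← det_mul, hmap, det_one]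
  calc (f.mapMatrix P).det * (charmatrix A).det * (f.mapMatrix P⁻¹).det
      = (charmatrix A).det * ((f.mapMatrix P).det * (f.mapMatrix P⁻¹).det) := by ring
    _ = (charmatrix A).det := by rw [this, mul_one]


lemma sum_dot {m : ℕ} {ι : Type*} [Fintype ι] (c : ι → ℝ) (v : ι → Fin m → ℝ) (y : Fin m → ℝ) :
    (∑ i, c i • v i) ⬝ᵥ y = ∑ i, c i * (v i ⬝ᵥ y) := by
  simp only [dotProduct, Finset.sum_apply, Pi.smul_apply, smul_eq_mul,
    Finset.sum_mul, Finset.mul_sum]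
  rw [Finset.sum_comm]
  congr 1; funext i; congr 1; funext p; ring

lemma dot_sum {m : ℕ} {ι : Type*} [Fintype ι] (c : ι → ℝ) (v : ι → Fin m → ℝ) (y : Fin m → ℝ) :
    y ⬝ᵥ (∑ i, c i • v i) = ∑ i, c i * (y ⬝ᵥ v i) := by
  simp only [dotProduct, Finset.sum_apply, Pi.smul_apply, smul_eq_mul,
    Finset.sum_mul, Finset.mul_sum]
  rw [Finset.sum_comm]
  congr 1; funext i; congr 1; funext p; ring

lemma quad_eval {m : ℕ} {ι : Type*} [Fintype ι] [DecidableEq ι]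
    (S : Matrix (Fin m) (Fin m) ℝ) (v : ι → Fin m → ℝ) (μ : ι → ℝ)
    (h : ∀ i j, v i ⬝ᵥ S *ᵥ v j = if i = j then μ i else 0) (c : ι → ℝ) :
    (∑ i, c i • v i) ⬝ᵥ S *ᵥ (∑ i, c i • v i) = ∑ i, μ i * c i ^ 2 := by
  have hmv : S *ᵥ (∑ i, c i • v i) = ∑ i, c i • (S *ᵥ v i) := by
    rw [show (∀ x, S *ᵥ x = S.mulVecLin x) from fun _ => rfl]
    simp [map_sum]
  rw [hmv, sum_dot]
  have : ∀ i, v i ⬝ᵥ (∑ j, c j • (S *ᵥ v j)) = μ i * c i := by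
    intro i
    rw [dot_sum]
    have h2 : ∀ j, c j * (v i ⬝ᵥ (S *ᵥ v j)) = c j * (if i = j then μ i else 0) := by
      intro j; rw [h i j]
    simp only [h2]
    rw [Finset.sum_eq_single i]
    · simp [mul_comm]
    · intro b _ hb; simp [Ne.symm hb]
    · intro hi; exact absurd (Finset.mem_univ i) hi
  simp only [this]
  congr 1; funext i; ring

lemma exists_ne_zero_mem_inf {m : ℕ} (U V : Submodule ℝ (Fin m → ℝ))
    (h : m < Module.finrank ℝ U + Module.finrank ℝ V) :
    ∃ x, x ∈ U ∧ x ∈ V ∧ x ≠ 0 := by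
  have hsum := Submodule.finrank_sup_add_finrank_inf_eq U V
  have hle : Module.finrank ℝ ↥(U ⊔ V) ≤ m := by
    have := Submodule.finrank_le (U ⊔ V)
    simpa [Module.finrank_pi] using this
  have hpos : 0 < Module.finrank ℝ ↥(U ⊓ V) := by omega
  have hne : U ⊓ V ≠ ⊥ := by
    intro hbot
    rw [hbot] at hpos
    simp at hpos
  obtain ⟨x, hx, hx0⟩ := Submodule.exists_mem_ne_zero_of_ne_bot hne
  exact ⟨x, (Submodule.mem_inf.mp hx).1, (Submodule.mem_inf.mp hx).2, hx0⟩

lemma card_subtype_le {m : ℕ} (k : Fin m) : Fintype.card {j : Fin m // j ≤ k} = k.1 + 1 := by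
  have e : {j : Fin m // j ≤ k} ≃ Fin (k.1 + 1) :=
    { toFun := fun j => ⟨j.1.1, by have := j.2; rw [Fin.le_def] at this; omega⟩
      invFun := fun i => ⟨⟨i.1, by have := i.2; have := k.2; omega⟩, by
        rw [Fin.le_def]; have := i.2; simpa using Nat.le_of_lt_succ this⟩
      left_inv := fun j => by ext; rfl
      right_inv := fun i => by ext; rfl }
  simp [Fintype.card_congr e]

lemma card_subtype_ge {m : ℕ} (k : Fin m) : Fintype.card {j : Fin m // k ≤ j} = m - k.1 := by
  have e : {j : Fin m // k ≤ j} ≃ Fin (m - k.1) :=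
    { toFun := fun j => ⟨j.1.1 - k.1, by have := j.1.2; have h2 := j.2; rw [Fin.le_def] at h2; omega⟩
      invFun := fun i => ⟨⟨k.1 + i.1, by have := i.2; omega⟩, by rw [Fin.le_def]; simp⟩
      left_inv := fun j => by ext; have h2 := j.2; rw [Fin.le_def] at h2; simp; omega
      right_inv := fun i => by ext; simp }
  simp [Fintype.card_congr e]


section
variable {m : ℕ} {ι : Type*} [Fintype ι] [DecidableEq ι]

-- assume quad_eval from before
lemma indep_of_orthonormal (S2 : Matrix (Fin m) (Fin m) ℝ) (v : ι → Fin m → ℝ)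
    (h2 : ∀ i j, v i ⬝ᵥ S2 *ᵥ v j = if i = j then (1:ℝ) else 0) :
    LinearIndependent ℝ v := by
  rw [Fintype.linearIndependent_iff]
  intro c hc
  have := quad_eval S2 v (fun _ => 1) h2 c
  rw [hc] at this
  simp only [zero_dotProduct, one_mul] at this
  intro i
  have hnn : ∀ j ∈ Finset.univ, (0:ℝ) ≤ c j ^ 2 := fun j _ => sq_nonneg _
  have := (Finset.sum_eq_zero_iff_of_nonneg hnn).mp this.symm i (Finset.mem_univ i)
  exact pow_eq_zero_iff (by norm_num) |>.mp this

lemma span_quad_bounds (S1 S2 : Matrix (Fin m) (Fin m) ℝ) (v : ι → Fin m → ℝ) (μ : ι → ℝ)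
    (h1 : ∀ i j, v i ⬝ᵥ S1 *ᵥ v j = if i = j then μ i else 0)
    (h2 : ∀ i j, v i ⬝ᵥ S2 *ᵥ v j = if i = j then (1:ℝ) else 0)
    (x : Fin m → ℝ) (hx : x ∈ Submodule.span ℝ (Set.range v)) :
    (∀ L : ℝ, (∀ i, L ≤ μ i) → L * (x ⬝ᵥ S2 *ᵥ x) ≤ x ⬝ᵥ S1 *ᵥ x) ∧
    (∀ L : ℝ, (∀ i, μ i ≤ L) → x ⬝ᵥ S1 *ᵥ x ≤ L * (x ⬝ᵥ S2 *ᵥ x)) := by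
  obtain ⟨c, rfl⟩ := (Submodule.mem_span_range_iff_exists_fun ℝ).mp hx
  rw [quad_eval S1 v μ h1 c, quad_eval S2 v (fun _ => 1) h2 c]
  simp only [one_mul]
  constructor
  · intro L hL
    rw [Finset.mul_sum]
    exact Finset.sum_le_sum fun i _ => mul_le_mul_of_nonneg_right (hL i) (sq_nonneg _)
  · intro L hL
    rw [Finset.mul_sum]
    exact Finset.sum_le_sum fun i _ => mul_le_mul_of_nonneg_right (hL i) (sq_nonneg _)
end


lemma snoc_dot {N : ℕ} (S : Matrix (Fin (N+1)) (Fin (N+1)) ℝ) (a b : Fin N → ℝ) :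
    (Fin.snoc a 0 : Fin (N+1) → ℝ) ⬝ᵥ S *ᵥ (Fin.snoc b 0 : Fin (N+1) → ℝ)
      = a ⬝ᵥ (S.submatrix Fin.castSucc Fin.castSucc) *ᵥ b := by
  simp only [dotProduct, Matrix.mulVec, Matrix.submatrix_apply]
  rw [Fin.sum_univ_castSucc]
  simp only [Fin.snoc_last, Fin.snoc_castSucc, zero_mul, add_zero]
  congr 1
  funext i
  congr 1
  rw [Fin.sum_univ_castSucc]
  simp [dotProduct]

lemma submatrix_posDef {N : ℕ} (S : Matrix (Fin (N+1)) (Fin (N+1)) ℝ) (hS : S.PosDef) :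
    (S.submatrix Fin.castSucc Fin.castSucc).PosDef := by
  rw [posDef_iff_dotProduct_mulVec]
  constructor
  · have h := hS.isHermitian
    ext i j
    have := congrFun (congrFun h.eq (Fin.castSucc i)) (Fin.castSucc j)
    simpa [Matrix.conjTranspose_apply] using this
  · intro x hx
    have hx' : (Fin.snoc x 0 : Fin (N+1) → ℝ) ≠ 0 := by
      intro hc
      apply hx
      funext i
      have := congrFun hc (Fin.castSucc i)
      simpa using this
    have := hS.dotProduct_mulVec_pos hx'
    have hstar : ∀ (y : Fin (N+1) → ℝ), star y = y := fun y => funext fun i => rfl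
    have hstar2 : star x = x := funext fun i => rfl
    rw [hstar] at this
    rw [hstar2, ← snoc_dot]
    exact this


section
variable {m : ℕ} {ι : Type*} [Fintype ι] [DecidableEq ι]

lemma interlace_core {m : ℕ} (S1 S2 : Matrix (Fin m) (Fin m) ℝ) (h2 : S2.PosDef)
    {ιa ιb : Type} [Fintype ιa] [DecidableEq ιa] [Fintype ιb] [DecidableEq ιb]
    (va : ιa → Fin m → ℝ) (μa : ιa → ℝ) (vb : ιb → Fin m → ℝ) (μb : ιb → ℝ)
    (ha1 : ∀ i j, va i ⬝ᵥ S1 *ᵥ va j = if i = j then μa i else 0)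
    (ha2 : ∀ i j, va i ⬝ᵥ S2 *ᵥ va j = if i = j then (1:ℝ) else 0)
    (hb1 : ∀ i j, vb i ⬝ᵥ S1 *ᵥ vb j = if i = j then μb i else 0)
    (hb2 : ∀ i j, vb i ⬝ᵥ S2 *ᵥ vb j = if i = j then (1:ℝ) else 0)
    (hcard : m < Fintype.card ιa + Fintype.card ιb)
    (La Lb : ℝ) (hLa : ∀ i, La ≤ μa i) (hLb : ∀ i, μb i ≤ Lb) :
    La ≤ Lb := by
  classical
  set U := Submodule.span ℝ (Set.range va)
  set V := Submodule.span ℝ (Set.range vb)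
  have hU : Module.finrank ℝ U = Fintype.card ιa :=
    finrank_span_eq_card (indep_of_orthonormal S2 va ha2)
  have hV : Module.finrank ℝ V = Fintype.card ιb :=
    finrank_span_eq_card (indep_of_orthonormal S2 vb hb2)
  obtain ⟨x, hxU, hxV, hx0⟩ := exists_ne_zero_mem_inf U V (by rw [hU, hV]; exact hcard)
  have hq2 : 0 < x ⬝ᵥ S2 *ᵥ x := by
    have := h2.dotProduct_mulVec_pos hx0
    have hstar : star x = x := funext fun i => rfl
    rwa [hstar] at this
  have hlow : La * (x ⬝ᵥ S2 *ᵥ x) ≤ x ⬝ᵥ S1 *ᵥ x :=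
    (span_quad_bounds S1 S2 va μa ha1 ha2 x hxU).1 La hLa
  have hhigh : x ⬝ᵥ S1 *ᵥ x ≤ Lb * (x ⬝ᵥ S2 *ᵥ x) :=
    (span_quad_bounds S1 S2 vb μb hb1 hb2 x hxV).2 Lb hLb
  exact le_of_mul_le_mul_right (hlow.trans hhigh) hq2


open scoped MatrixOrder in
lemma exists_eigensystem {m : ℕ} (S1 S2 : Matrix (Fin m) (Fin m) ℝ)
    (h1 : S1.PosDef) (h2 : S2.PosDef) (lam : Fin m → ℝ) (hmono : Monotone lam)
    (hchar : (S1 * S2⁻¹).charpoly = ∏ i, (X - C (lam i))) :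
    ∃ v : Fin m → (Fin m → ℝ),
      (∀ i j, v i ⬝ᵥ S1 *ᵥ v j = if i = j then lam i else 0) ∧
      (∀ i j, v i ⬝ᵥ S2 *ᵥ v j = if i = j then (1:ℝ) else 0) := by
  classical
  set Q := CFC.sqrt S2 with hQdef
  have hQQ : Q * Q = S2 := CFC.sqrt_mul_sqrt_self S2 h2.posSemidef.nonneg
  have hQh : Q.IsHermitian := (CFC.sqrt_nonneg S2).posSemidef.isHermitian
  have hdetQ : IsUnit Q.det := by
    have hd : Q.det * Q.det = S2.det := by rw [← det_mul, hQQ]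
    have := h2.det_pos
    refine isUnit_iff_ne_zero.mpr fun h0 => ?_
    rw [h0, mul_zero] at hd
    exact this.ne hd
  have hQi : Q * Q⁻¹ = 1 := mul_nonsing_inv _ hdetQ
  have hQi' : Q⁻¹ * Q = 1 := nonsing_inv_mul _ hdetQ
  set M := Q⁻¹ * S1 * Q⁻¹ with hMdef
  have hQinvH : Q⁻¹ᴴ = Q⁻¹ := by rw [conjTranspose_nonsing_inv, hQh.eq]
  have hM : M.IsHermitian := by
    rw [Matrix.IsHermitian, hMdef, conjTranspose_mul, conjTranspose_mul, hQinvH,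
      h1.isHermitian.eq, mul_assoc]
  -- similarity
  have hQM : Q * M = S1 * Q⁻¹ := by
    rw [hMdef, ← mul_assoc, ← mul_assoc, hQi, one_mul]
  have hsim : S1 * S2⁻¹ = Q * M * Q⁻¹ := by
    rw [hQM, ← hQQ, Matrix.mul_inv_rev, ← mul_assoc]
  -- eigenvalues of M
  set e := hM.eigenvalues with hedef
  set V := (hM.eigenvectorUnitary : Matrix (Fin m) (Fin m) ℝ) with hVdef
  have hVV : V * star V = 1 := by
    exact (Matrix.mem_unitaryGroup_iff).mp hM.eigenvectorUnitary.2
  have hdetV : IsUnit V.det := by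
    refine isUnit_iff_ne_zero.mpr fun h0 => ?_
    have := congrArg det hVV
    rw [det_mul, h0, zero_mul, det_one] at this
    simp at this
  have hVinv : V⁻¹ = star V := inv_eq_right_inv hVV
  have hspec : M = V * diagonal e * V⁻¹ := by
    rw [hVinv]
    have := hM.spectral_theorem
    simpa using this
  have hcharM : M.charpoly = ∏ i, (X - C (e i)) := by
    rw [hspec, charpoly_conj V _ hdetV, charpoly_diag]
  have hcharS : (S1 * S2⁻¹).charpoly = ∏ i, (X - C (e i)) := by
    rw [hsim, charpoly_conj Q M hdetQ, hcharM]
  -- sort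
  set σ := Tuple.sort e with hσdef
  have hlam : lam = e ∘ σ := by
    refine mono_eq_of_prod _ _ hmono (Tuple.monotone_sort e) ?_
    rw [← hchar, hcharS]
    exact (Equiv.prod_comp σ (fun i => X - C (e i))).symm
  -- eigenvectors
  set u : Fin m → (Fin m → ℝ) := fun j => ⇑(hM.eigenvectorBasis j) with hudef
  have hu : ∀ i j, u i ⬝ᵥ u j = if i = j then (1:ℝ) else 0 := by
    intro i j
    have := (orthonormal_iff_ite (𝕜 := ℝ)).mp hM.eigenvectorBasis.orthonormal i j
    rw [← this]
    simp [hudef, dotProduct, PiLp.inner_apply, RCLike.inner_apply, mul_comm]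
  have heig : ∀ j, M *ᵥ u j = e j • u j := fun j => hM.mulVec_eigenvectorBasis j
  set v : Fin m → (Fin m → ℝ) := fun i => Q⁻¹ *ᵥ u (σ i) with hvdef
  have hQt : Qᵀ = Q := by
    rw [← conjTranspose_eq_transpose_of_trivial, hQh.eq]
  have key : ∀ a b : Fin m → ℝ, (Q⁻¹ *ᵥ a) ⬝ᵥ (Q *ᵥ b) = a ⬝ᵥ b := by
    intro a b
    rw [dotProduct_mulVec]
    have hvm : (Q⁻¹ *ᵥ a) ᵥ* Q = a := by
      have step : (Q⁻¹ *ᵥ a) ᵥ* Q = Qᵀ *ᵥ (Q⁻¹ *ᵥ a) :=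
        (mulVec_transpose Q (Q⁻¹ *ᵥ a)).symm
      rw [step, hQt, mulVec_mulVec, hQi, one_mulVec]
    rw [hvm]
  have hS2v : ∀ j, S2 *ᵥ v j = Q *ᵥ u (σ j) := by
    intro j
    show S2 *ᵥ (Q⁻¹ *ᵥ u (σ j)) = _
    rw [mulVec_mulVec, ← hQQ, mul_assoc, hQi, mul_one]
  have hS1v : ∀ j, S1 *ᵥ v j = e (σ j) • (Q *ᵥ u (σ j)) := by
    intro j
    show S1 *ᵥ (Q⁻¹ *ᵥ u (σ j)) = _
    rw [mulVec_mulVec, ← hQM, ← mulVec_mulVec, heig, mulVec_smul]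
  refine ⟨v, ?_, ?_⟩
  · intro i j
    rw [hS1v, dotProduct_smul, show v i = Q⁻¹ *ᵥ u (σ i) from rfl, key, hu]
    have : lam i = e (σ i) := by rw [hlam]; rfl
    by_cases hij : i = j
    · subst hij
      simp [← this]
    · have : σ i ≠ σ j := fun hc => hij (σ.injective hc)
      simp [hij, this]
  · intro i j
    rw [hS2v, show v i = Q⁻¹ *ᵥ u (σ i) from rfl, key, hu]
    have : σ i = σ j ↔ i = j := ⟨fun hc => σ.injective hc, fun hc => by rw [hc]⟩
    simp [this]


lemma ite_subtype {ι : Type*} [DecidableEq ι] {p : ι → Prop} [DecidablePred p] (f : ι → ℝ) (a b : Subtype p) :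
    (if a.1 = b.1 then f a.1 else 0) = if a = b then f a.1 else 0 := by
  by_cases h : a = b
  · simp [h]
  · rw [if_neg (fun hc => h (Subtype.ext hc)), if_neg h]

theorem stmt18 {N : ℕ} (S1' S2' : Matrix (Fin (N + 1)) (Fin (N + 1)) ℝ)
    (h1 : S1'.PosDef) (h2 : S2'.PosDef)
    (lam1 : Fin (N + 1) → ℝ) (hmono1 : Monotone lam1)
    (hchar1 : (S1' * S2'⁻¹).charpoly = ∏ i, (X - C (lam1 i)))
    (lam2 : Fin N → ℝ) (hmono2 : Monotone lam2)
    (hchar2 :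
      ((S1'.submatrix Fin.castSucc Fin.castSucc) *
        (S2'.submatrix Fin.castSucc Fin.castSucc)⁻¹).charpoly = ∏ i, (X - C (lam2 i))) :
    ∀ k : Fin N, lam1 k.castSucc ≤ lam2 k ∧ lam2 k ≤ lam1 k.succ := by
  classical
  intro k
  have hp1 : (S1'.submatrix Fin.castSucc Fin.castSucc).PosDef := submatrix_posDef S1' h1
  have hp2 : (S2'.submatrix Fin.castSucc Fin.castSucc).PosDef := submatrix_posDef S2' h2
  obtain ⟨v, hv1, hv2⟩ := exists_eigensystem S1' S2' h1 h2 lam1 hmono1 hchar1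
  obtain ⟨w, hw1, hw2⟩ := exists_eigensystem _ _ hp1 hp2 lam2 hmono2 hchar2
  set w' : Fin N → (Fin (N+1) → ℝ) := fun j => (Fin.snoc (w j) 0) with hw'def
  have hw1' : ∀ i j, w' i ⬝ᵥ S1' *ᵥ w' j = if i = j then lam2 i else 0 := by
    intro i j
    rw [hw'def]
    dsimp only
    rw [snoc_dot]
    exact hw1 i j
  have hw2' : ∀ i j, w' i ⬝ᵥ S2' *ᵥ w' j = if i = j then (1:ℝ) else 0 := by
    intro i j
    rw [hw'def]
    dsimp only
    rw [snoc_dot]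
    exact hw2 i j
  constructor
  · refine interlace_core S1' S2' h2
      (ιa := {i : Fin (N+1) // k.castSucc ≤ i}) (ιb := {j : Fin N // j ≤ k})
      (fun i => v i.1) (fun i => lam1 i.1) (fun j => w' j.1) (fun j => lam2 j.1)
      (fun a b => (hv1 a.1 b.1).trans (ite_subtype lam1 a b))
      (fun a b => by rw [hv2 a.1 b.1]; exact ite_subtype (fun _ => (1:ℝ)) a b)
      (fun a b => (hw1' a.1 b.1).trans (ite_subtype lam2 a b))
      (fun a b => by rw [hw2' a.1 b.1]; exact ite_subtype (fun _ => (1:ℝ)) a b)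
      ?_ _ _ (fun i => hmono1 i.2) (fun j => hmono2 j.2)
    rw [card_subtype_ge, card_subtype_le]
    have hk := k.2
    simp only [Fin.coe_castSucc]
    omega
  · refine interlace_core S1' S2' h2
      (ιa := {j : Fin N // k ≤ j}) (ιb := {i : Fin (N+1) // i ≤ k.succ})
      (fun j => w' j.1) (fun j => lam2 j.1) (fun i => v i.1) (fun i => lam1 i.1)
      (fun a b => (hw1' a.1 b.1).trans (ite_subtype lam2 a b))
      (fun a b => by rw [hw2' a.1 b.1]; exact ite_subtype (fun _ => (1:ℝ)) a b)
      (fun a b => (hv1 a.1 b.1).trans (ite_subtype lam1 a b))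
      (fun a b => by rw [hv2 a.1 b.1]; exact ite_subtype (fun _ => (1:ℝ)) a b)
      ?_ _ _ (fun j => hmono2 j.2) (fun i => hmono1 i.2)
    rw [card_subtype_ge, card_subtype_le]
    have hk := k.2
    simp only [Fin.val_succ]
    omega
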